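/- The skeleton map sk, defined by sk(leaf) = ∅ and sk(∧(t_1,...,t_n)) = B_+^{n-1}(sk(t_1)···sk(t_n)) for n ≥ 2, extends to an algebra morphism from the Hopf algebra of reduced plane trees H_PT to the Connes–Kreimer Hopf algebra H_CK of rooted trees decorated by positive integers, and this morphism is a morphism of coalgebras (hence of Hopf algebras): Δ_CK ∘ sk = (sk ⊗ sk) ∘ Δ_PT. -/

import Mathlib

noncomputable section

open scoped TensorProduct

/-- Reduced plane trees: every internal vertex has at least two children. -/
inductive STree where
  | leaf : STree
  | node (a b : STree) (l : List STree) : STree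

/-- Rooted trees decorated by positive integers (children listed in some order). -/
inductive DTree where
  | node (d : ℕ+) (ch : List DTree) : DTree

/-- The Hopf algebra of (forests of) reduced plane trees, modeled on words of trees. -/
abbrev HPT := MonoidAlgebra ℚ (FreeMonoid STree)

/-- The (decorated) Connes–Kreimer Hopf algebra, modeled on words of decorated rooted
trees. -/
abbrev HCK := MonoidAlgebra ℚ (FreeMonoid DTree)

mutual
  /-- The skeleton map: `sk(leaf) = ∅` and
  `sk(∧(t_1,…,t_n)) = B₊^{n-1}(sk(t_1) ⋯ sk(t_n))`, as a forest of decorated trees. -/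
  def skT : STree → List DTree
    | .leaf => []
    | .node a b l =>
        [DTree.node ⟨1 + l.length, by omega⟩ (skT a ++ skT b ++ skL l)]
  def skL : List STree → List DTree
    | [] => []
    | t :: ts => skT t ++ skL ts
end

/-- The skeleton map on forests, as a monoid morphism on words. -/
def skM : FreeMonoid STree →* FreeMonoid DTree :=
  FreeMonoid.lift fun t => FreeMonoid.ofList (skT t)

/-- The induced linear map `H_PT → H_CK`. -/
def skLin : HPT →ₗ[ℚ] HCK := MonoidAlgebra.mapDomainLinearMap ℚ ℚ ⇑skM

/-- The grafting operator `B₊^d` on `H_CK`. -/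
def Bplus (d : ℕ+) : HCK →ₗ[ℚ] HCK :=
  MonoidAlgebra.mapDomainLinearMap ℚ ℚ fun w : FreeMonoid DTree =>
    FreeMonoid.ofList [DTree.node d w.toList]

mutual
  /-- The Connes–Kreimer coproduct on decorated trees, defined recursively by
  `Δ(B₊^d(F)) = 1 ⊗ B₊^d(F) + (B₊^d ⊗ Id) Δ(F)`. -/
  def deltaCKt : DTree → HCK ⊗[ℚ] HCK
    | .node d ch =>
        1 ⊗ₜ (MonoidAlgebra.single (FreeMonoid.ofList [DTree.node d ch]) 1) +
          (TensorProduct.map (Bplus d) LinearMap.id) (deltaCKf ch)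
  /-- The (multiplicative) extension of the Connes–Kreimer coproduct to forests. -/
  def deltaCKf : List DTree → HCK ⊗[ℚ] HCK
    | [] => 1
    | t :: ts => deltaCKt t * deltaCKf ts
end

/-- Grafting a word of plane trees under a common root. -/
def mkNode : List STree → STree
  | a :: b :: l => .node a b l
  | [a] => a
  | [] => .leaf

/-- The grafting operator `Λ` on `H_PT`. -/
def graft : HPT →ₗ[ℚ] HPT :=
  MonoidAlgebra.mapDomainLinearMap ℚ ℚ fun w : FreeMonoid STree =>
    FreeMonoid.ofList [mkNode w.toList]

/-- The basis element of `H_PT` corresponding to a single tree. -/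
def onePT (t : STree) : HPT := MonoidAlgebra.single (FreeMonoid.ofList [t]) 1

mutual
  /-- The coproduct of `H_PT` on trees, defined recursively by `Δ(leaf) = leaf ⊗ leaf` and
  `Δ(∧(t_1,…,t_n)) = leaf ⊗ ∧(t_1,…,t_n) + (Λ ⊗ Id) (Δ(t_1) ⋯ Δ(t_n))`. -/
  def deltaPTt : STree → HPT ⊗[ℚ] HPT
    | .leaf => (onePT .leaf) ⊗ₜ (onePT .leaf)
    | .node a b l =>
        (onePT .leaf) ⊗ₜ (onePT (.node a b l)) +
          (TensorProduct.map graft LinearMap.id) (deltaPTt a * deltaPTt b * deltaPTf l)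
  /-- The multiplicative extension of the coproduct of `H_PT` to forests. -/
  def deltaPTf : List STree → HPT ⊗[ℚ] HPT
    | [] => 1
    | t :: ts => deltaPTt t * deltaPTf ts
end

/-! ### Auxiliary lemmas -/

lemma skLin_apply (x : HPT) : skLin x = MonoidAlgebra.mapDomain skM x := rfl

lemma skLin_single (w : FreeMonoid STree) (c : ℚ) :
    skLin (MonoidAlgebra.single w c) = MonoidAlgebra.single (skM w) c :=
  MonoidAlgebra.mapDomainLinearMap_single _ _ _

lemma skLin_mul (x y : HPT) : skLin (x * y) = skLin x * skLin y := by
  simp only [skLin_apply]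
  exact MonoidAlgebra.mapDomain_mul skM x y

lemma skLin_one : skLin (1 : HPT) = 1 := by
  rw [MonoidAlgebra.one_def, skLin_single, map_one, MonoidAlgebra.one_def]

/-- The skeleton map as an algebra morphism. -/
def skAlg : HPT →ₐ[ℚ] HCK := MonoidAlgebra.mapDomainAlgHom ℚ ℚ skM

lemma skAlg_apply (x : HPT) : skAlg x = skLin x := rfl

lemma map_skLin_eq :
    TensorProduct.map skLin skLin = (Algebra.TensorProduct.map skAlg skAlg).toLinearMap := by
  apply TensorProduct.ext'
  intro a b
  simp [skAlg_apply]

lemma T_mul (x y : HPT ⊗[ℚ] HPT) :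
    TensorProduct.map skLin skLin (x * y) =
      TensorProduct.map skLin skLin x * TensorProduct.map skLin skLin y := by
  rw [map_skLin_eq]
  exact map_mul (Algebra.TensorProduct.map skAlg skAlg) x y

lemma T_one : TensorProduct.map skLin skLin (1 : HPT ⊗[ℚ] HPT) = 1 := by
  rw [map_skLin_eq]
  exact map_one (Algebra.TensorProduct.map skAlg skAlg)

lemma skL_singleton (t : STree) : skL [t] = skT t := by simp [skL]

lemma skL_append (u v : List STree) : skL (u ++ v) = skL u ++ skL v := by
  induction u with
  | nil => simp [skL]
  | cons t ts ih => simp [skL, ih]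

lemma skM_ofList (L : List STree) :
    skM (FreeMonoid.ofList L) = FreeMonoid.ofList (skL L) := by
  induction L with
  | nil => simp [FreeMonoid.ofList_nil, skL]
  | cons t ts ih =>
      rw [FreeMonoid.ofList_cons, map_mul, ih]
      show skM (FreeMonoid.of t) * _ = _
      rw [show skM (FreeMonoid.of t) = FreeMonoid.ofList (skT t) from rfl]
      rw [← FreeMonoid.ofList_append]
      rfl

lemma skLin_onePT (t : STree) :
    skLin (onePT t) = MonoidAlgebra.single (FreeMonoid.ofList (skT t)) 1 := by
  rw [onePT, skLin_single, FreeMonoid.ofList_singleton,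
    show FreeMonoid.of t = FreeMonoid.ofList [t] from rfl, skM_ofList]
  congr 1
  simp [skL]

lemma skLin_onePT_leaf : skLin (onePT STree.leaf) = 1 := by
  rw [skLin_onePT]
  rfl

lemma deltaCKf_append (u v : List DTree) :
    deltaCKf (u ++ v) = deltaCKf u * deltaCKf v := by
  induction u with
  | nil => rw [List.nil_append, deltaCKf, one_mul]
  | cons t ts ih => rw [List.cons_append, deltaCKf, deltaCKf, ih, mul_assoc]

lemma graft_single (w : FreeMonoid STree) (c : ℚ) :
    graft (MonoidAlgebra.single w c) =
      MonoidAlgebra.single (FreeMonoid.ofList [mkNode w.toList]) c :=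
  MonoidAlgebra.mapDomainLinearMap_single _ _ _

lemma Bplus_single (d : ℕ+) (w : FreeMonoid DTree) (c : ℚ) :
    Bplus d (MonoidAlgebra.single w c) =
      MonoidAlgebra.single (FreeMonoid.ofList [DTree.node d w.toList]) c :=
  MonoidAlgebra.mapDomainLinearMap_single _ _ _

/-- Elements of `H_PT ⊗ H_PT` whose left factor is a single word of length `n`. -/
def SS (n : ℕ) : Set (HPT ⊗[ℚ] HPT) :=
  {z | ∃ (w : FreeMonoid STree) (y : HPT),
    w.toList.length = n ∧ z = (MonoidAlgebra.single w 1 : HPT) ⊗ₜ[ℚ] y}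

lemma SS_mul {m n k : ℕ} (hk : m + n = k) {x y : HPT ⊗[ℚ] HPT}
    (hx : x ∈ Submodule.span ℚ (SS m)) (hy : y ∈ Submodule.span ℚ (SS n)) :
    x * y ∈ Submodule.span ℚ (SS k) := by
  subst hk
  induction hx using Submodule.span_induction with
  | mem x hx =>
      induction hy using Submodule.span_induction with
      | mem y hy =>
          obtain ⟨w, a, hw, rfl⟩ := hx
          obtain ⟨w', b, hw', rfl⟩ := hy
          apply Submodule.subset_span
          refine ⟨w * w', a * b, ?_, ?_⟩
          · rw [FreeMonoid.toList_mul, List.length_append, hw, hw']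
          · rw [Algebra.TensorProduct.tmul_mul_tmul, MonoidAlgebra.single_mul_single,
              one_mul]
      | zero => rw [mul_zero]; exact Submodule.zero_mem _
      | add y z _ _ hy hz => rw [mul_add]; exact Submodule.add_mem _ hy hz
      | smul c y _ hy => rw [mul_smul_comm]; exact Submodule.smul_mem _ _ hy
  | zero => rw [zero_mul]; exact Submodule.zero_mem _
  | add x z _ _ hx hz => rw [add_mul]; exact Submodule.add_mem _ hx hz
  | smul c x _ hx => rw [smul_mul_assoc]; exact Submodule.smul_mem _ _ hx

lemma one_mem_SS : (1 : HPT ⊗[ℚ] HPT) ∈ Submodule.span ℚ (SS 0) := by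
  apply Submodule.subset_span
  exact ⟨1, 1, rfl, by rw [Algebra.TensorProduct.one_def, MonoidAlgebra.one_def]⟩

lemma graft_mem_SS (z : HPT ⊗[ℚ] HPT) :
    TensorProduct.map graft LinearMap.id z ∈ Submodule.span ℚ (SS 1) := by
  induction z with
  | zero => rw [map_zero]; exact Submodule.zero_mem _
  | add x y hx hy => rw [map_add]; exact Submodule.add_mem _ hx hy
  | tmul a b =>
      rw [TensorProduct.map_tmul, LinearMap.id_apply]
      induction a using MonoidAlgebra.induction_linear with
      | zero => rw [map_zero, TensorProduct.zero_tmul]; exact Submodule.zero_mem _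
      | add f g hf hg =>
          rw [map_add, TensorProduct.add_tmul]; exact Submodule.add_mem _ hf hg
      | single w c =>
          rw [graft_single]
          have : (MonoidAlgebra.single (FreeMonoid.ofList [mkNode w.toList]) c : HPT)
              = c • MonoidAlgebra.single (FreeMonoid.ofList [mkNode w.toList]) 1 := by
            rw [MonoidAlgebra.smul_single, smul_eq_mul, mul_one]
          rw [this, ← TensorProduct.smul_tmul']
          exact Submodule.smul_mem _ _ (Submodule.subset_span
            ⟨FreeMonoid.ofList [mkNode w.toList], b, rfl, rfl⟩)

lemma deltaPTt_mem_SS (t : STree) : deltaPTt t ∈ Submodule.span ℚ (SS 1) := by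
  cases t with
  | leaf =>
      rw [deltaPTt]
      exact Submodule.subset_span ⟨FreeMonoid.ofList [STree.leaf], onePT .leaf, rfl, rfl⟩
  | node a b l =>
      rw [deltaPTt]
      refine Submodule.add_mem _ ?_ (graft_mem_SS _)
      exact Submodule.subset_span ⟨FreeMonoid.ofList [STree.leaf], _, rfl, rfl⟩

lemma deltaPTf_mem_SS (l : List STree) :
    deltaPTf l ∈ Submodule.span ℚ (SS l.length) := by
  induction l with
  | nil => exact one_mem_SS
  | cons t ts ih =>
      rw [deltaPTf]
      exact SS_mul (by rw [List.length_cons]; omega) (deltaPTt_mem_SS t) ih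

lemma skT_mkNode (a b : STree) (rest : List STree) :
    skT (mkNode (a :: b :: rest)) =
      [DTree.node ⟨1 + rest.length, by omega⟩ (skL (a :: b :: rest))] := by
  simp [mkNode, skT, skL, List.append_assoc]

lemma key (d : ℕ+) (z : HPT ⊗[ℚ] HPT)
    (hz : z ∈ Submodule.span ℚ (SS ((d : ℕ) + 1))) :
    TensorProduct.map skLin skLin (TensorProduct.map graft LinearMap.id z) =
      TensorProduct.map (Bplus d) LinearMap.id (TensorProduct.map skLin skLin z) := by
  induction hz using Submodule.span_induction with
  | mem z hzm =>
      obtain ⟨w, y, hw, rfl⟩ := hzm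
      simp only [TensorProduct.map_tmul, LinearMap.id_apply]
      rw [graft_single, skLin_single, skLin_single, Bplus_single]
      congr 2
      have h1 : skM w = FreeMonoid.ofList (skL w.toList) := by
        conv_lhs => rw [← FreeMonoid.ofList_toList w]
        rw [skM_ofList]
      rw [h1, FreeMonoid.toList_ofList, skM_ofList, skL_singleton]
      generalize hL : FreeMonoid.toList w = L at hw ⊢
      have hd := d.pos
      match L, hw with
      | [a], hw =>
          exfalso
          simp only [List.length_singleton] at hw
          omega
      | a :: b :: rest, hw =>
          obtain ⟨dv, hdv⟩ := d
          rw [skT_mkNode]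
          have h2 : 1 + rest.length = dv := by
            simp only [List.length_cons, PNat.mk_coe] at hw
            omega
          subst h2
          rfl
  | zero => simp
  | add x y _ _ hx hy => simp only [map_add, hx, hy]
  | smul c x _ hx => simp only [map_smul, hx]

mutual
  theorem mainT (t : STree) :
      deltaCKf (skT t) = (TensorProduct.map skLin skLin) (deltaPTt t) := by
    cases t with
    | leaf =>
        rw [skT, deltaCKf, deltaPTt, TensorProduct.map_tmul, skLin_onePT_leaf,
          Algebra.TensorProduct.one_def]
    | node a b l =>
        have hF : deltaCKf (skT a ++ skT b ++ skL l) =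
            TensorProduct.map skLin skLin (deltaPTt a * deltaPTt b * deltaPTf l) := by
          rw [deltaCKf_append, deltaCKf_append, mainT a, mainT b, mainL l, T_mul, T_mul]
        have hmem : deltaPTt a * deltaPTt b * deltaPTf l ∈
            Submodule.span ℚ (SS (((⟨1 + l.length, by omega⟩ : ℕ+) : ℕ) + 1)) :=
          SS_mul (by show (1 : ℕ) + 1 + l.length = (1 + l.length) + 1; omega)
            (SS_mul rfl (deltaPTt_mem_SS a) (deltaPTt_mem_SS b))
            (deltaPTf_mem_SS l)
        rw [skT, deltaCKf, deltaCKf, mul_one]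
        erw [deltaCKt]
        rw [deltaPTt, map_add,
          TensorProduct.map_tmul, skLin_onePT_leaf, skLin_onePT, hF,
          key _ _ hmem]
        simp only [skT]
  termination_by sizeOf t
  theorem mainL (l : List STree) :
      deltaCKf (skL l) = (TensorProduct.map skLin skLin) (deltaPTf l) := by
    cases l with
    | nil => rw [skL, deltaCKf, deltaPTf, T_one]
    | cons t ts =>
        rw [skL, deltaCKf_append, deltaPTf, T_mul, mainT t, mainL ts]
  termination_by sizeOf l
end

/-- **The skeleton map is a morphism of Hopf algebras.** It is an algebra morphism from
`H_PT` to `H_CK`, and it intertwines the coproducts: `Δ_CK ∘ sk = (sk ⊗ sk) ∘ Δ_PT`. -/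
theorem skeleton_hopf_morphism :
    (∀ x y : HPT, skLin (x * y) = skLin x * skLin y) ∧
    (∀ t : STree,
      deltaCKf (skT t) = (TensorProduct.map skLin skLin) (deltaPTt t)) := by
  exact ⟨skLin_mul, mainT⟩
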